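/- If W ⊆ ℂ⁴ is a 2-dimensional complex subspace with j̃(W) = W, then the projective line ℙ(W) is a fiber of the twistor projection: there exists q ∈ ℍℙ¹ such that ℙ(W) = π⁻¹(q). -/

import Mathlib

/-- The conjugate-linear map `j̃ : ℂ⁴ → ℂ⁴`,
`j̃(z₀,z₁,z₂,z₃) = (−conj z₁, conj z₀, −conj z₃, conj z₂)`,
inducing the fixed-point-free anti-holomorphic involution `j` on `ℂℙ³`. -/
noncomputable def jt (z : Fin 4 → ℂ) : Fin 4 → ℂ :=
  ![-(starRingEnd ℂ) (z 1), (starRingEnd ℂ) (z 0), -(starRingEnd ℂ) (z 3), (starRingEnd ℂ) (z 2)]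

lemma jt_ne_zero {z : Fin 4 → ℂ} (hz : z ≠ 0) : jt z ≠ 0 := by
  intro h
  apply hz
  have h0 := congrFun h 0
  have h1 := congrFun h 1
  have h2 := congrFun h 2
  have h3 := congrFun h 3
  simp [jt] at h0 h1 h2 h3
  funext i
  fin_cases i <;> simp [h0, h1, h2, h3]

/-- The embedding `ℂ → ℍ` identifying `ℂ` with the subfield of `ℍ` spanned by `1` and `i`. -/
noncomputable def toQ (z : ℂ) : Quaternion ℝ := ⟨z.re, z.im, 0, 0⟩

/-- The imaginary unit `j ∈ ℍ`. -/
noncomputable def qJ : Quaternion ℝ := ⟨0, 0, 1, 0⟩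

lemma toQ_add_mul (a b : ℂ) :
    toQ a + toQ b * qJ = (⟨a.re, a.im, b.re, b.im⟩ : Quaternion ℝ) := by
  ext <;> (simp only [Quaternion.re_add, Quaternion.imI_add, Quaternion.imJ_add, Quaternion.imK_add,
    Quaternion.re_mul, Quaternion.imI_mul, Quaternion.imJ_mul, Quaternion.imK_mul]; simp [toQ, qJ])

/-- The vector-level twistor projection `(z₀,z₁,z₂,z₃) ↦ (z₀+z₁j, z₂+z₃j) ∈ ℍ²`. -/
noncomputable def piv (z : Fin 4 → ℂ) : Fin 2 → Quaternion ℝ :=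
  ![toQ (z 0) + toQ (z 1) * qJ, toQ (z 2) + toQ (z 3) * qJ]

lemma piv_ne_zero {z : Fin 4 → ℂ} (hz : z ≠ 0) : piv z ≠ 0 := by
  intro h
  apply hz
  have h0 := congrFun h 0
  have h1 := congrFun h 1
  simp only [piv, toQ_add_mul, Matrix.cons_val_zero, Matrix.cons_val_one, Matrix.head_cons,
    Pi.zero_apply] at h0 h1
  rw [Quaternion.ext_iff] at h0 h1
  simp at h0 h1
  funext i
  fin_cases i <;> apply Complex.ext <;> simp [h0.1, h0.2.1, h0.2.2.1, h0.2.2.2,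
    h1.1, h1.2.1, h1.2.2.1, h1.2.2.2] <;> rfl

/-- The twistor projection `π : ℂℙ³ → ℍℙ¹`, `π[z₀,z₁,z₂,z₃] = [z₀+z₁j, z₂+z₃j]`,
where `ℍℙ¹` is the projectivization of `ℍ²` as a left `ℍ`-module. -/
noncomputable def twistorProj (x : Projectivization ℂ (Fin 4 → ℂ)) :
    Projectivization (Quaternion ℝ) (Fin 2 → Quaternion ℝ) :=
  Projectivization.mk (Quaternion ℝ) (piv x.rep) (piv_ne_zero x.rep_nonzero)

/-- The projectivization `ℙ(W) ⊆ ℂℙ³` of a complex subspace `W ⊆ ℂ⁴`: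
the set of points of `ℂℙ³` whose representatives lie in `W`. -/
def projSet (W : Submodule ℂ (Fin 4 → ℂ)) : Set (Projectivization ℂ (Fin 4 → ℂ)) :=
  {x | x.rep ∈ W}

lemma toQ_re' (z : ℂ) : (toQ z).re = z.re := rfl
lemma toQ_imI' (z : ℂ) : (toQ z).imI = z.im := rfl
lemma toQ_imJ' (z : ℂ) : (toQ z).imJ = 0 := rfl
lemma toQ_imK' (z : ℂ) : (toQ z).imK = 0 := rfl
lemma qJ_re' : qJ.re = 0 := rfl
lemma qJ_imI' : qJ.imI = 0 := rfl
lemma qJ_imJ' : qJ.imJ = 1 := rfl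
lemma qJ_imK' : qJ.imK = 0 := rfl


lemma piv_add' (z z' : Fin 4 → ℂ) : piv (z + z') = piv z + piv z' := by
  funext i; fin_cases i <;> ext <;> simp [piv, toQ_re', toQ_imI', toQ_imJ', toQ_imK', qJ_re', qJ_imI', qJ_imJ', qJ_imK', Quaternion.re_mul, Quaternion.imI_mul, Quaternion.imJ_mul, Quaternion.imK_mul, Complex.mul_re, Complex.mul_im] <;> ring

lemma piv_smul' (a : ℂ) (z : Fin 4 → ℂ) : piv (a • z) = toQ a • piv z := by
  funext i; fin_cases i <;> ext <;> simp [piv, toQ_re', toQ_imI', toQ_imJ', toQ_imK', qJ_re', qJ_imI', qJ_imJ', qJ_imK', Quaternion.re_mul, Quaternion.imI_mul, Quaternion.imJ_mul, Quaternion.imK_mul, Complex.mul_re, Complex.mul_im] <;> ring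

lemma piv_jt' (z : Fin 4 → ℂ) : piv (jt z) = qJ • piv z := by
  funext i; fin_cases i <;> ext <;> simp [piv, toQ_re', toQ_imI', toQ_imJ', toQ_imK', qJ_re', qJ_imI', qJ_imJ', qJ_imK', Quaternion.re_mul, Quaternion.imI_mul, Quaternion.imJ_mul, Quaternion.imK_mul, Complex.mul_re, Complex.mul_im, jt] <;> ring

lemma piv_inj' {z z' : Fin 4 → ℂ} (h : piv z = piv z') : z = z' := by
  have h0 := congrFun h 0
  have h1 := congrFun h 1
  rw [Quaternion.ext_iff] at h0 h1
  simp [piv, toQ_re', toQ_imI', toQ_imJ', toQ_imK', qJ_re', qJ_imI', qJ_imJ', qJ_imK', Quaternion.re_mul, Quaternion.imI_mul, Quaternion.imJ_mul, Quaternion.imK_mul, Complex.mul_re, Complex.mul_im] at h0 h1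
  funext i
  fin_cases i <;> apply Complex.ext <;>
    simp [h0.1, h0.2.1, h0.2.2.1, h0.2.2.2, h1.1, h1.2.1, h1.2.2.1, h1.2.2.2]

lemma toQ_add_mul_eq_zero {a b : ℂ} (h : toQ a + toQ b * qJ = 0) : a = 0 ∧ b = 0 := by
  rw [Quaternion.ext_iff] at h
  simp [piv, toQ_re', toQ_imI', toQ_imJ', toQ_imK', qJ_re', qJ_imI', qJ_imJ', qJ_imK', Quaternion.re_mul, Quaternion.imI_mul, Quaternion.imJ_mul, Quaternion.imK_mul, Complex.mul_re, Complex.mul_im] at h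
  exact ⟨Complex.ext h.1 h.2.1, Complex.ext h.2.2.1 h.2.2.2⟩

lemma piv_combo (a b : ℂ) (w : Fin 4 → ℂ) :
    piv (a • w + b • jt w) = (toQ a + toQ b * qJ) • piv w := by
  rw [piv_add', piv_smul', piv_smul', piv_jt', add_smul, mul_smul]

lemma toQ_exists (q : Quaternion ℝ) : ∃ a b : ℂ, toQ a + toQ b * qJ = q := by
  refine ⟨⟨q.re, q.imI⟩, ⟨q.imJ, q.imK⟩, ?_⟩
  rw [toQ_add_mul]
  rfl

/-- If `W ⊆ ℂ⁴` is a 2-dimensional complex subspace with `j̃(W) = W`, then the projective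
line `ℙ(W)` is a fiber of the twistor projection: there is `q ∈ ℍℙ¹` with `ℙ(W) = π⁻¹(q)`. -/
theorem stmt6 (W : Submodule ℂ (Fin 4 → ℂ)) (hW : Module.finrank ℂ W = 2)
    (hj : jt '' (W : Set (Fin 4 → ℂ)) = (W : Set (Fin 4 → ℂ))) :
    ∃ q : Projectivization (Quaternion ℝ) (Fin 2 → Quaternion ℝ),
      projSet W = twistorProj ⁻¹' {q} := by
  -- pick a nonzero vector of W
  have hWbot : W ≠ ⊥ := by
    intro h; rw [h] at hW; simp at hW
  obtain ⟨w, hwW, hw0⟩ := Submodule.exists_mem_ne_zero_of_ne_bot hWbot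
  have hjw : jt w ∈ W := by
    have h2 : jt w ∈ jt '' (W : Set (Fin 4 → ℂ)) := ⟨w, hwW, rfl⟩
    rwa [hj] at h2
  -- linear independence of w and jt w
  have hli : LinearIndependent ℂ ![w, jt w] := by
    rw [LinearIndependent.pair_iff]
    intro a b hab
    have h1 : (toQ a + toQ b * qJ) • piv w = 0 := by
      rw [← piv_combo, hab]
      funext i; fin_cases i <;> ext <;> simp [piv, toQ_re', toQ_imI', toQ_imJ', toQ_imK', qJ_re', qJ_imI', qJ_imJ', qJ_imK', Quaternion.re_mul, Quaternion.imI_mul, Quaternion.imJ_mul, Quaternion.imK_mul, Complex.mul_re, Complex.mul_im] <;> rfl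
    have hpw := piv_ne_zero hw0
    have h2 : toQ a + toQ b * qJ = 0 := by
      by_contra hc
      apply hpw
      funext i
      have := congrFun h1 i
      simp only [Pi.smul_apply, smul_eq_mul, Pi.zero_apply] at this ⊢
      rcases mul_eq_zero.1 this with h | h
      · exact absurd h hc
      · exact h
    exact toQ_add_mul_eq_zero h2
  -- W is the span of w and jt w
  have hspan : Submodule.span ℂ ({w, jt w} : Set (Fin 4 → ℂ)) = W := by
    apply Submodule.eq_of_le_of_finrank_eq
    · rw [Submodule.span_le]
      rintro x (rfl | rfl)
      · exact hwW
      · exact hjw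
    · rw [hW]
      have hr : Set.range ![w, jt w] = ({w, jt w} : Set (Fin 4 → ℂ)) := by
        ext x; simp [Matrix.range_cons, or_comm]
      rw [← hr, finrank_span_eq_card hli, Fintype.card_fin]
  refine ⟨Projectivization.mk (Quaternion ℝ) (piv w) (piv_ne_zero hw0), ?_⟩
  ext x
  simp only [projSet, Set.mem_setOf_eq, Set.mem_preimage, Set.mem_singleton_iff, twistorProj,
    Projectivization.mk_eq_mk_iff']
  rw [← hspan, Submodule.mem_span_pair]
  constructor
  · rintro ⟨a, b, hab⟩
    exact ⟨toQ a + toQ b * qJ, by rw [← piv_combo, hab]⟩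
  · rintro ⟨q, hq⟩
    obtain ⟨a, b, rfl⟩ := toQ_exists q
    exact ⟨a, b, piv_inj' (by rw [piv_combo, hq])⟩
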